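/- Let τ be an i-simplex in a simplicial complex Y, let 1 ≤ k ≤ i, and suppose that for every j with k ≤ j ≤ i, every j-face of τ is contained in no simplex of Y other than faces of τ (τ is 'k-good' and maximal in this sense). Then Y collapses onto a subcomplex Y' in which all j-faces of τ with j > k are removed, all j-faces with j < k remain, and exactly C(i,k) of the C(i+1,k+1) k-faces of τ remain; moreover each removed pair in the collapse sequence is a free face pair. -/

import Mathlib

open Finset

/-- `Collapses Z W` : the finite family of simplices `Z` can be transformed into `W`
by a sequence of elementary collapses, each removing a free face pair `(ρ, ρ ∪ {v})`
where `ρ ∪ {v}` is the unique simplex of the current complex strictly containing `ρ`. -/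
inductive Collapses {V : Type*} [DecidableEq V] :
    Finset (Finset V) → Finset (Finset V) → Prop
  | refl (Z : Finset (Finset V)) : Collapses Z Z
  | step (Z W : Finset (Finset V)) (ρ σ : Finset V) (v : V)
      (hρ : ρ ∈ Z) (hσ : σ ∈ Z) (hv : v ∉ ρ) (hσρ : σ = insert v ρ)
      (huniq : ∀ π ∈ Z, ρ ⊂ π → π = σ)
      (h : Collapses (Z \ {ρ, σ}) W) : Collapses Z W

/-- Let `τ` be an `i`-simplex in a (finite) simplicial complex `Y`, let
`1 ≤ k ≤ i`, and suppose every `j`-face of `τ` with `k ≤ j ≤ i` is contained in no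
simplex of `Y` other than faces of `τ`.  Then `Y` collapses (through free face pairs,
all of which are faces of `τ`) onto a subcomplex `Y'` in which all `j`-faces of `τ`
with `j > k` are removed, all `j`-faces with `j < k` remain, and exactly `C(i,k)` of
the `k`-faces of `τ` remain. -/
private lemma collapse_aux {V : Type*} [DecidableEq V]
    (Y : Finset (Finset V)) (τ : Finset V) (v₀ : V) (hv₀ : v₀ ∈ τ) (k : ℕ)
    (hk1 : 1 ≤ k) (S : Finset (Finset V))
    (hS : ∀ ρ, ρ ∈ S ↔ ρ ⊆ τ.erase v₀ ∧ k + 1 ≤ ρ.card)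
    (hmemY : ∀ ρ : Finset V, ρ ⊆ τ → ρ ≠ ∅ → ρ ∈ Y)
    (hgood' : ∀ ρ ∈ S, ∀ π ∈ Y, ρ ⊆ π → π ⊆ τ) :
    ∀ n (P : Finset (Finset V)), P.card = n → P ⊆ S →
      (∀ ρ ∈ P, ∀ π ∈ S, π ⊆ ρ → π ∈ P) →
      Collapses (Y \ ((S \ P) ∪ (S \ P).image (insert v₀)))
        (Y \ (S ∪ S.image (insert v₀))) := by
  intro n
  induction n with
  | zero =>
    intro P hPcard _ _
    rw [Finset.card_eq_zero.mp hPcard, Finset.sdiff_empty]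
    exact Collapses.refl _
  | succ n ih =>
    intro P hPcard hPS hPdc
    have hPne : P.Nonempty := Finset.card_pos.mp (by omega)
    obtain ⟨ρ, hρP, hρmax⟩ := P.exists_max_image (fun ρ => ρ.card) hPne
    have hρS : ρ ∈ S := hPS hρP
    obtain ⟨hρτ₀, hρk⟩ := (hS ρ).mp hρS
    have hv₀ρ : v₀ ∉ ρ := fun h => (Finset.mem_erase.mp (hρτ₀ h)).1 rfl
    have hρτ : ρ ⊆ τ := hρτ₀.trans (Finset.erase_subset _ _)
    have hρne : ρ ≠ ∅ := by
      intro h; rw [h, Finset.card_empty] at hρk; omega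
    set D := S \ P with hD
    set σ := insert v₀ ρ with hσdef
    have hστ : σ ⊆ τ := Finset.insert_subset hv₀ hρτ
    -- ρ is in the current complex
    have hρZ : ρ ∈ Y \ (D ∪ D.image (insert v₀)) := by
      rw [Finset.mem_sdiff]
      refine ⟨hmemY ρ hρτ hρne, ?_⟩
      rw [Finset.mem_union]
      rintro (h | h)
      · exact (Finset.mem_sdiff.mp h).2 hρP
      · obtain ⟨π, _, hπ⟩ := Finset.mem_image.mp h
        exact hv₀ρ (hπ ▸ Finset.mem_insert_self v₀ π)
    have hσZ : σ ∈ Y \ (D ∪ D.image (insert v₀)) := by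
      rw [Finset.mem_sdiff]
      refine ⟨hmemY σ hστ (Finset.insert_ne_empty _ _), ?_⟩
      rw [Finset.mem_union]
      rintro (h | h)
      · have := ((hS σ).mp (Finset.mem_sdiff.mp h).1).1
        exact (Finset.mem_erase.mp (this (Finset.mem_insert_self v₀ ρ))).1 rfl
      · obtain ⟨π, hπD, hπ⟩ := Finset.mem_image.mp h
        have hv₀π : v₀ ∉ π := fun h =>
          (Finset.mem_erase.mp (((hS π).mp (Finset.mem_sdiff.mp hπD).1).1 h)).1 rfl
        have : π = ρ := by
          have := congrArg (Finset.erase · v₀) hπ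
          simpa [hσdef, Finset.erase_insert hv₀π, Finset.erase_insert hv₀ρ] using this
        exact (Finset.mem_sdiff.mp hπD).2 (this ▸ hρP)
    refine Collapses.step _ _ ρ σ v₀ hρZ hσZ hv₀ρ rfl ?_ ?_
    · -- uniqueness
      intro π hπZ hρπ
      obtain ⟨hπY, hπnR⟩ := Finset.mem_sdiff.mp hπZ
      have hπτ : π ⊆ τ := hgood' ρ hρS π hπY hρπ.subset
      by_cases hv₀π : v₀ ∈ π
      · set π' := π.erase v₀ with hπ'
        have hρπ' : ρ ⊆ π' := Finset.subset_erase.mpr ⟨hρπ.subset, hv₀ρ⟩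
        rcases eq_or_ne π' ρ with h | h
        · rw [hσdef, ← h, hπ', Finset.insert_erase hv₀π]
        · exfalso
          have hπ'S : π' ∈ S := (hS π').mpr
            ⟨Finset.erase_subset_erase _ hπτ,
              hρk.trans (Finset.card_le_card hρπ')⟩
          have hπ'big : ρ.card < π'.card :=
            Finset.card_lt_card (Finset.ssubset_iff_subset_ne.mpr ⟨hρπ', Ne.symm h⟩)
          have hπ'D : π' ∈ D := Finset.mem_sdiff.mpr
            ⟨hπ'S, fun h => absurd (hρmax π' h) (by omega)⟩
          exact hπnR (Finset.mem_union_right _ (Finset.mem_image.mpr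
            ⟨π', hπ'D, by rw [Finset.insert_erase hv₀π]⟩))
      · exfalso
        have hπS : π ∈ S := (hS π).mpr
          ⟨Finset.subset_erase.mpr ⟨hπτ, hv₀π⟩,
            hρk.trans (Finset.card_le_card hρπ.subset)⟩
        have hπbig : ρ.card < π.card := Finset.card_lt_card hρπ
        have hπD : π ∈ D := Finset.mem_sdiff.mpr
          ⟨hπS, fun h => absurd (hρmax π h) (by omega)⟩
        exact hπnR (Finset.mem_union_left _ hπD)
    · -- recurse
      have hset : (Y \ (D ∪ D.image (insert v₀))) \ {ρ, σ}
          = Y \ ((S \ P.erase ρ) ∪ (S \ P.erase ρ).image (insert v₀)) := by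
        have h1 : S \ P.erase ρ = insert ρ D := by
          ext x
          simp only [Finset.mem_sdiff, Finset.mem_erase, Finset.mem_insert, hD]
          constructor
          · rintro ⟨hxS, hx⟩
            by_cases hxρ : x = ρ
            · exact Or.inl hxρ
            · exact Or.inr ⟨hxS, fun hxP => hx ⟨hxρ, hxP⟩⟩
          · rintro (rfl | ⟨hxS, hxP⟩)
            · exact ⟨hρS, fun h => h.1 rfl⟩
            · exact ⟨hxS, fun h => hxP h.2⟩
        rw [h1, Finset.image_insert]
        ext x
        simp only [Finset.mem_sdiff, Finset.mem_union, Finset.mem_insert,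
          Finset.mem_singleton, hσdef]
        tauto
      rw [hset]
      refine ih (P.erase ρ) (by rw [Finset.card_erase_of_mem hρP, hPcard]; omega) 
        ((Finset.erase_subset _ _).trans hPS) ?_
      intro x hx π hπS hπx
      have hxP := Finset.mem_erase.mp hx
      refine Finset.mem_erase.mpr ⟨?_, hPdc x hxP.2 π hπS hπx⟩
      rintro rfl
      exact hxP.1 (Finset.eq_of_subset_of_card_le hπx (hρmax x hxP.2)).symm

theorem good_simplex_collapse {V : Type*} [Fintype V] [DecidableEq V]
    (Y : Finset (Finset V)) (hY0 : ∅ ∉ Y)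
    (hYdc : ∀ σ ∈ Y, ∀ ρ : Finset V, ρ ⊆ σ → ρ ≠ ∅ → ρ ∈ Y)
    (τ : Finset V) (hτ : τ ∈ Y) (i k : ℕ) (hτi : τ.card = i + 1)
    (hk1 : 1 ≤ k) (hki : k ≤ i)
    (hgood : ∀ j, k ≤ j → j ≤ i → ∀ ρ ⊆ τ, ρ.card = j + 1 →
      ∀ σ ∈ Y, ρ ⊆ σ → σ ⊆ τ) :
    ∃ Y' : Finset (Finset V), Collapses Y Y' ∧ Y' ⊆ Y ∧
      (∀ ρ ∈ Y, ρ ∉ Y' → ρ ⊆ τ) ∧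
      (∀ ρ ⊆ τ, k + 1 < ρ.card → ρ ∉ Y') ∧
      (∀ ρ ⊆ τ, ρ ≠ ∅ → ρ.card < k + 1 → ρ ∈ Y') ∧
      (Y'.filter (fun ρ => ρ ⊆ τ ∧ ρ.card = k + 1)).card = i.choose k := by
  obtain ⟨v₀, hv₀⟩ : τ.Nonempty := Finset.card_pos.mp (by omega)
  have hτ₀card : (τ.erase v₀).card = i := by
    rw [Finset.card_erase_of_mem hv₀, hτi]; omega
  set S : Finset (Finset V) :=
    (τ.erase v₀).powerset.filter (fun ρ => k + 1 ≤ ρ.card) with hSdef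
  have hS : ∀ ρ, ρ ∈ S ↔ ρ ⊆ τ.erase v₀ ∧ k + 1 ≤ ρ.card := by
    intro ρ; simp [hSdef]
  have hmemY : ∀ ρ : Finset V, ρ ⊆ τ → ρ ≠ ∅ → ρ ∈ Y :=
    fun ρ h1 h2 => hYdc τ hτ ρ h1 h2
  have hgood' : ∀ ρ ∈ S, ∀ π ∈ Y, ρ ⊆ π → π ⊆ τ := by
    intro ρ hρS π hπY hρπ
    obtain ⟨hρτ₀, hρk⟩ := (hS ρ).mp hρS
    have hρτ : ρ ⊆ τ := hρτ₀.trans (Finset.erase_subset _ _)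
    have hρc : ρ.card ≤ i := hτ₀card ▸ Finset.card_le_card hρτ₀
    exact hgood (ρ.card - 1) (by omega) (by omega) ρ hρτ (by omega) π hπY hρπ
  have hcol := collapse_aux Y τ v₀ hv₀ k hk1 S hS hmemY hgood' S.card S rfl
    Finset.Subset.rfl (fun _ _ π hπ _ => hπ)
  rw [Finset.sdiff_self, Finset.image_empty, Finset.empty_union,
    Finset.sdiff_empty] at hcol
  set Y' := Y \ (S ∪ S.image (insert v₀)) with hY'def
  have hY'mem : ∀ x, x ∈ Y' ↔ x ∈ Y ∧ x ∉ S ∧ x ∉ S.image (insert v₀) := by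
    intro x
    simp [hY'def, Finset.mem_sdiff, not_or, and_assoc]
  refine ⟨Y', hcol, Finset.sdiff_subset, ?_, ?_, ?_, ?_⟩
  · -- everything removed is a face of τ
    intro ρ hρY hρY'
    have : ρ ∈ S ∪ S.image (insert v₀) := by
      by_contra h
      exact hρY' (Finset.mem_sdiff.mpr ⟨hρY, h⟩)
    rcases Finset.mem_union.mp this with h | h
    · exact (((hS ρ).mp h).1).trans (Finset.erase_subset _ _)
    · obtain ⟨π, hπS, rfl⟩ := Finset.mem_image.mp h
      exact Finset.insert_subset hv₀
        ((((hS π).mp hπS).1).trans (Finset.erase_subset _ _))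
  · -- big faces removed
    intro ρ hρτ hρbig
    intro hρY'
    obtain ⟨_, hρnS, hρnI⟩ := (hY'mem ρ).mp hρY'
    by_cases hv₀ρ : v₀ ∈ ρ
    · refine hρnI (Finset.mem_image.mpr ⟨ρ.erase v₀, (hS _).mpr ⟨?_, ?_⟩, ?_⟩)
      · exact Finset.erase_subset_erase _ hρτ
      · rw [Finset.card_erase_of_mem hv₀ρ]; omega
      · exact Finset.insert_erase hv₀ρ
    · exact hρnS ((hS ρ).mpr ⟨Finset.subset_erase.mpr ⟨hρτ, hv₀ρ⟩, by omega⟩)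
  · -- small faces remain
    intro ρ hρτ hρne hρsmall
    refine (hY'mem ρ).mpr ⟨hmemY ρ hρτ hρne, ?_, ?_⟩
    · intro h; have := ((hS ρ).mp h).2; omega
    · intro h
      obtain ⟨π, hπS, rfl⟩ := Finset.mem_image.mp h
      obtain ⟨hπτ₀, hπk⟩ := (hS π).mp hπS
      have hv₀π : v₀ ∉ π := fun h => (Finset.mem_erase.mp (hπτ₀ h)).1 rfl
      rw [Finset.card_insert_of_notMem hv₀π] at hρsmall
      omega
  · -- count of remaining k-faces
    have hfilt : Y'.filter (fun ρ => ρ ⊆ τ ∧ ρ.card = k + 1)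
        = ((τ.erase v₀).powersetCard k).image (insert v₀) := by
      ext ρ
      simp only [Finset.mem_filter, Finset.mem_image, Finset.mem_powersetCard]
      constructor
      · rintro ⟨hρY', hρτ, hρcard⟩
        obtain ⟨hρY, hρnS, hρnI⟩ := (hY'mem ρ).mp hρY'
        have hv₀ρ : v₀ ∈ ρ := by
          by_contra hv₀ρ
          exact hρnS ((hS ρ).mpr ⟨Finset.subset_erase.mpr ⟨hρτ, hv₀ρ⟩, by omega⟩)
        refine ⟨ρ.erase v₀, ⟨Finset.erase_subset_erase _ hρτ, ?_⟩,
          Finset.insert_erase hv₀ρ⟩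
        rw [Finset.card_erase_of_mem hv₀ρ, hρcard]; omega
      · rintro ⟨π, ⟨hπτ₀, hπcard⟩, rfl⟩
        have hv₀π : v₀ ∉ π := fun h => (Finset.mem_erase.mp (hπτ₀ h)).1 rfl
        have hcard : (insert v₀ π).card = k + 1 := by
          rw [Finset.card_insert_of_notMem hv₀π, hπcard]
        have hsub : insert v₀ π ⊆ τ :=
          Finset.insert_subset hv₀ (hπτ₀.trans (Finset.erase_subset _ _))
        refine ⟨(hY'mem _).mpr ⟨hmemY _ hsub (Finset.insert_ne_empty _ _), ?_, ?_⟩,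
          hsub, hcard⟩
        · intro h
          exact (Finset.mem_erase.mp (((hS _).mp h).1
            (Finset.mem_insert_self v₀ π))).1 rfl
        · intro h
          obtain ⟨π', hπ'S, hπ'⟩ := Finset.mem_image.mp h
          have hv₀π' : v₀ ∉ π' := fun h =>
            (Finset.mem_erase.mp (((hS π').mp hπ'S).1 h)).1 rfl
          have hc : k + 1 ≤ π'.card := ((hS π').mp hπ'S).2
          have heq : π' = π := by
            have := congrArg (Finset.erase · v₀) hπ'
            simpa [Finset.erase_insert hv₀π', Finset.erase_insert hv₀π] using this
          rw [heq, hπcard] at hc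
          omega
    rw [hfilt, Finset.card_image_of_injOn, Finset.card_powersetCard, hτ₀card]
    intro a ha b hb hab
    simp only [Finset.mem_coe, Finset.mem_powersetCard] at ha hb
    have hva : v₀ ∉ a := fun h => (Finset.mem_erase.mp (ha.1 h)).1 rfl
    have hvb : v₀ ∉ b := fun h => (Finset.mem_erase.mp (hb.1 h)).1 rfl
    have := congrArg (Finset.erase · v₀) hab
    simpa [Finset.erase_insert hva, Finset.erase_insert hvb] using this
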